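/- Let f : ℝᵈ → ℝ be twice continuously differentiable, μ-strongly convex and L-smooth on a ball B_ε(w₀), and let f̃ be another differentiable function. Let w̃₀ satisfy ‖w̃₀ − w₀‖ ≤ ε. Define w₁ = w₀ − h∇f(w₀) and w̃₁ = w̃₀ − h∇f̃(w̃₀). If ‖∇f(w̃₀) − ∇f̃(w̃₀)‖ ≤ με and 0 < h ≤ 1/L, then ‖w̃₁ − w₁‖ ≤ ε. -/

import Mathlib

open scoped RealInnerProductSpace

open Metric InnerProductSpace Filter Topology

section aux
variable {E : Type*} [NormedAddCommGroup E] [InnerProductSpace ℝ E]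

lemma psd_cs (A : E →L[ℝ] E) (hsymm : ∀ z w : E, ⟪A z, w⟫ = ⟪z, A w⟫)
    (hpos : ∀ z, 0 ≤ ⟪A z, z⟫) (z w : E) :
    ⟪A z, w⟫ ^ 2 ≤ ⟪A z, z⟫ * ⟪A w, w⟫ := by
  have key : ∀ t : ℝ, 0 ≤ ⟪A w, w⟫ * (t * t) + (2 * ⟪A z, w⟫) * t + ⟪A z, z⟫ := by
    intro t
    have h0 := hpos (z + t • w)
    have e1 : A (z + t • w) = A z + t • A w := by
      rw [map_add, map_smul]
    rw [e1, inner_add_left, inner_add_right, inner_add_right,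
      real_inner_smul_left, real_inner_smul_right, real_inner_smul_left,
      real_inner_smul_right] at h0
    have hs : ⟪A w, z⟫ = ⟪A z, w⟫ := by rw [hsymm w z, real_inner_comm]
    rw [hs] at h0
    nlinarith [h0]
  have hdisc := discrim_le_zero key
  rw [discrim] at hdisc
  nlinarith [hdisc]

lemma psd_opnorm (A : E →L[ℝ] E) (hsymm : ∀ z w : E, ⟪A z, w⟫ = ⟪z, A w⟫)
    (hpos : ∀ z, 0 ≤ ⟪A z, z⟫) {c : ℝ} (hc : 0 ≤ c)
    (hle : ∀ z, ⟪A z, z⟫ ≤ c * ‖z‖ ^ 2) (z : E) : ‖A z‖ ≤ c * ‖z‖ := by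
  rcases eq_or_ne (A z) 0 with h0 | h0
  · rw [h0, norm_zero]; positivity
  have h1 := psd_cs A hsymm hpos z (A z)
  have h2 := hle z
  have h3 := hle (A z)
  have h5 := hpos (A z)
  have e1 : ⟪A z, A z⟫ = ‖A z‖ ^ 2 := real_inner_self_eq_norm_sq (A z)
  rw [e1] at h1
  have hAz : 0 < ‖A z‖ := norm_pos_iff.2 h0
  have h7 : ⟪A z, z⟫ * ⟪A (A z), A z⟫ ≤ (c * ‖z‖ ^ 2) * (c * ‖A z‖ ^ 2) :=
    mul_le_mul h2 h3 h5 (by positivity)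
  have h6 : ‖A z‖ ^ 2 ≤ (c * ‖z‖) ^ 2 := by
    have h8 : ‖A z‖ ^ 2 * ‖A z‖ ^ 2 ≤ (c * ‖z‖) ^ 2 * ‖A z‖ ^ 2 := by nlinarith
    exact le_of_mul_le_mul_right h8 (by positivity)
  exact (abs_le_of_sq_le_sq' h6 (by positivity)).2

end aux

set_option maxHeartbeats 1000000 in
/-- One-step stability under gradient substitution: if `f` is C², `μ`-strongly convex and
`L`-smooth on the ball of radius `ε` around `w₀` (with gradient `g`), `f'` is another
function with gradient `g'` at `w₀'`, `‖w₀' - w₀‖ ≤ ε`, `‖g w₀' - g' w₀'‖ ≤ μ·ε`, and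
`0 < h ≤ 1/L`, then `‖(w₀' - h·g' w₀') - (w₀ - h·g w₀)‖ ≤ ε`. -/
theorem stmt4 {d : ℕ} (f f' : EuclideanSpace ℝ (Fin d) → ℝ)
    (g g' : EuclideanSpace ℝ (Fin d) → EuclideanSpace ℝ (Fin d))
    (w₀ w₀' : EuclideanSpace ℝ (Fin d)) (μ L ε h : ℝ)
    (hε : 0 < ε) (hμ : 0 < μ) (hμL : μ ≤ L)
    (hC2 : ContDiffOn ℝ 2 f (Metric.closedBall w₀ ε))
    (hgrad : ∀ x ∈ Metric.closedBall w₀ ε, HasGradientAt f (g x) x)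
    (hgrad' : HasGradientAt f' (g' w₀') w₀')
    (hsc : ∀ x ∈ Metric.closedBall w₀ ε, ∀ y ∈ Metric.closedBall w₀ ε,
      μ * ‖x - y‖ ^ 2 ≤ ⟪g x - g y, x - y⟫)
    (hsm : ∀ x ∈ Metric.closedBall w₀ ε, ∀ y ∈ Metric.closedBall w₀ ε,
      ‖g x - g y‖ ≤ L * ‖x - y‖)
    (hd : ‖w₀' - w₀‖ ≤ ε)
    (hgap : ‖g w₀' - g' w₀'‖ ≤ μ * ε)
    (hh0 : 0 < h) (hh : h ≤ 1 / L) :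
    ‖(w₀' - h • g' w₀') - (w₀ - h • g w₀)‖ ≤ ε := by
  classical
  have hL0 : 0 < L := lt_of_lt_of_le hμ hμL
  have hhL : h * L ≤ 1 := by
    rw [le_div_iff₀ hL0] at hh; linarith
  have hhμ : h * μ ≤ 1 := le_trans (by nlinarith) hhL
  have hc0 : 0 ≤ 1 - h * μ := by linarith
  set B := Metric.closedBall w₀ ε with hB
  set O := Metric.ball w₀ ε with hO
  have hOB : O ⊆ B := Metric.ball_subset_closedBall
  have hw₀O : w₀ ∈ O := Metric.mem_ball_self hε
  have hw₀B : w₀ ∈ B := hOB hw₀O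
  have hw₀'B : w₀' ∈ B := by
    rw [hB, Metric.mem_closedBall, dist_eq_norm]; exact hd
  set J : EuclideanSpace ℝ (Fin d) ≃L[ℝ] StrongDual ℝ (EuclideanSpace ℝ (Fin d)) :=
    (toDual ℝ (EuclideanSpace ℝ (Fin d))).toContinuousLinearEquiv with hJ
  have hJapp : ∀ v : EuclideanSpace ℝ (Fin d), J v = toDual ℝ _ v := fun v => rfl
  -- Hessian at interior points
  have key : ∀ x : EuclideanSpace ℝ (Fin d),
      ∃ H : EuclideanSpace ℝ (Fin d) →L[ℝ] EuclideanSpace ℝ (Fin d), x ∈ O →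
      HasFDerivAt g H x ∧ (∀ z w, ⟪H z, w⟫ = ⟪z, H w⟫) ∧
      (∀ z, μ * ‖z‖ ^ 2 ≤ ⟪H z, z⟫) ∧ (∀ z, ‖H z‖ ≤ L * ‖z‖) := by
    intro x
    by_cases hx : x ∈ O
    swap
    · exact ⟨0, fun hx' => absurd hx' hx⟩
    have hxB : x ∈ B := hOB hx
    have hBx : B ∈ 𝓝 x := Filter.mem_of_superset (Metric.isOpen_ball.mem_nhds hx) hOB
    have hfx : ContDiffAt ℝ 2 f x := hC2.contDiffAt hBx
    have hD : ContDiffAt ℝ 1 (fderiv ℝ f) x := hfx.fderiv_right (by norm_num)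
    have hDd : DifferentiableAt ℝ (fderiv ℝ f) x := hD.differentiableAt (by norm_num)
    have hgeq : ∀ᶠ y in 𝓝 x, g y = J.symm (fderiv ℝ f y) := by
      filter_upwards [hBx] with y hy
      have h1 : fderiv ℝ f y = toDual ℝ _ (g y) := (hgrad y hy).hasFDerivAt.fderiv
      rw [h1, ← hJapp, ContinuousLinearEquiv.symm_apply_apply]
    set H : EuclideanSpace ℝ (Fin d) →L[ℝ] EuclideanSpace ℝ (Fin d) :=
      ((J.symm : StrongDual ℝ (EuclideanSpace ℝ (Fin d)) →L[ℝ] EuclideanSpace ℝ (Fin d))).comp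
        (fderiv ℝ (fderiv ℝ f) x) with hHdef
    have hgH : HasFDerivAt g H x := by
      have h1 : HasFDerivAt (fun y => J.symm (fderiv ℝ f y)) H x :=
        ((J.symm : StrongDual ℝ (EuclideanSpace ℝ (Fin d)) →L[ℝ]
          EuclideanSpace ℝ (Fin d)).hasFDerivAt).comp x hDd.hasFDerivAt
      exact h1.congr_of_eventuallyEq hgeq
    have hsymmH : ∀ z w, ⟪H z, w⟫ = ⟪z, H w⟫ := by
      have hf'ev : ∀ᶠ y in 𝓝 x, HasFDerivAt f (toDual ℝ (EuclideanSpace ℝ (Fin d)) (g y)) y := by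
        filter_upwards [hBx] with y hy
        exact (hgrad y hy).hasFDerivAt
      have hx2 : HasFDerivAt (fun y => toDual ℝ (EuclideanSpace ℝ (Fin d)) (g y))
          ((J : EuclideanSpace ℝ (Fin d) →L[ℝ]
            StrongDual ℝ (EuclideanSpace ℝ (Fin d))).comp H) x := by
        have h2 := ((J : EuclideanSpace ℝ (Fin d) →L[ℝ]
          StrongDual ℝ (EuclideanSpace ℝ (Fin d))).hasFDerivAt (x := g x)).comp x hgH
        exact h2
      have e1 : ∀ v u : EuclideanSpace ℝ (Fin d),
          ((J : EuclideanSpace ℝ (Fin d) →L[ℝ]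
            StrongDual ℝ (EuclideanSpace ℝ (Fin d))).comp H) v u = ⟪H v, u⟫ := by
        intro v u
        simp [ContinuousLinearMap.comp_apply, hJapp, InnerProductSpace.toDual_apply_apply]
      intro z w
      have hsymm := second_derivative_symmetric_of_eventually hf'ev hx2 z w
      rw [e1, e1] at hsymm
      rw [hsymm, real_inner_comm]
    have master : ∀ z : EuclideanSpace ℝ (Fin d), z ≠ 0 →
        μ * ‖z‖ ^ 2 ≤ ⟪H z, z⟫ ∧ ‖H z‖ ≤ L * ‖z‖ := by
      intro z hz
      have hz0 : 0 < ‖z‖ := norm_pos_iff.2 hz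
      have hdx : dist x w₀ < ε := Metric.mem_ball.1 hx
      set δ : ℝ := (ε - dist x w₀) / ‖z‖ with hδdef
      have hδ : 0 < δ := div_pos (by linarith) hz0
      have hmem : ∀ t ∈ Set.Ioo (0:ℝ) δ, x + t • z ∈ B := by
        intro t ht
        rw [hB, Metric.mem_closedBall]
        have e2 : dist (x + t • z) x = t * ‖z‖ := by
          rw [dist_eq_norm, add_sub_cancel_left, norm_smul, Real.norm_eq_abs, abs_of_pos ht.1]
        have e4 : δ * ‖z‖ = ε - dist x w₀ := by
          rw [hδdef]; field_simp
        calc dist (x + t • z) w₀ ≤ dist (x + t • z) x + dist x w₀ := dist_triangle _ _ _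
          _ = t * ‖z‖ + dist x w₀ := by rw [e2]
          _ ≤ δ * ‖z‖ + dist x w₀ := by
              have := mul_le_mul_of_nonneg_right ht.2.le hz0.le
              linarith
          _ = ε := by rw [e4]; ring
      have hline : HasDerivAt (fun t : ℝ => x + t • z) z 0 := by
        simpa using ((hasDerivAt_id (0:ℝ)).smul_const z).const_add x
      have hg0 : HasFDerivAt g H (x + (0:ℝ) • z) := by simpa using hgH
      have hψ : HasDerivAt (fun t : ℝ => g (x + t • z)) (H z) 0 := by
        exact hg0.comp_hasDerivAt 0 hline
      have hsl : Tendsto (fun t : ℝ => t⁻¹ • (g (x + t • z) - g x)) (𝓝[>] (0:ℝ))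
          (𝓝 (H z)) := by
        have h1 := hasDerivAt_iff_tendsto_slope.1 hψ
        have h2 : Tendsto (slope (fun t : ℝ => g (x + t • z)) 0) (𝓝[>] (0:ℝ)) (𝓝 (H z)) :=
          h1.mono_left (nhdsWithin_mono 0 fun t ht => ne_of_gt ht)
        refine h2.congr fun t => ?_
        rw [slope_def_module]
        simp
      have hIoo : Set.Ioo (0:ℝ) δ ∈ 𝓝[>] (0:ℝ) := Ioo_mem_nhdsGT_of_mem ⟨le_refl (0:ℝ), hδ⟩
      constructor
      · refine ge_of_tendsto (hsl.inner tendsto_const_nhds) ?_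
        filter_upwards [hIoo] with t ht
        have h1 := hsc (x + t • z) (hmem t ht) x hxB
        rw [add_sub_cancel_left, real_inner_smul_right, norm_smul, Real.norm_eq_abs,
          abs_of_pos ht.1] at h1
        rw [real_inner_smul_left, inv_mul_eq_div, le_div_iff₀ ht.1]
        nlinarith [h1, ht.1]
      · refine le_of_tendsto hsl.norm ?_
        filter_upwards [hIoo] with t ht
        have h1 := hsm (x + t • z) (hmem t ht) x hxB
        rw [add_sub_cancel_left, norm_smul, Real.norm_eq_abs, abs_of_pos ht.1] at h1
        rw [norm_smul, Real.norm_eq_abs, abs_inv, abs_of_pos ht.1, inv_mul_eq_div,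
          div_le_iff₀ ht.1]
        nlinarith [h1, ht.1]
    refine ⟨H, fun _ => ⟨hgH, hsymmH, ?_, ?_⟩⟩
    · intro z
      rcases eq_or_ne z 0 with rfl | hz
      · simp
      · exact (master z hz).1
    · intro z
      rcases eq_or_ne z 0 with rfl | hz
      · simp
      · exact (master z hz).2
  choose H hKey using key
  set T : EuclideanSpace ℝ (Fin d) → EuclideanSpace ℝ (Fin d) :=
    fun w => w - h • g w with hT
  set Afun : EuclideanSpace ℝ (Fin d) →
      EuclideanSpace ℝ (Fin d) →L[ℝ] EuclideanSpace ℝ (Fin d) :=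
    fun x => ContinuousLinearMap.id ℝ (EuclideanSpace ℝ (Fin d)) - h • H x with hA
  have hAapp : ∀ x z, Afun x z = z - h • H x z := by
    intro x z
    simp [hA, ContinuousLinearMap.sub_apply, ContinuousLinearMap.smul_apply]
  have hAnorm : ∀ x ∈ O, ‖Afun x‖ ≤ 1 - h * μ := by
    intro x hx
    obtain ⟨hgH, hsymmH, hμH, hLH⟩ := hKey x hx
    apply ContinuousLinearMap.opNorm_le_bound _ hc0
    intro z
    apply psd_opnorm
    · intro z w
      rw [hAapp, hAapp, inner_sub_left, inner_sub_right, real_inner_smul_left,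
        real_inner_smul_right, hsymmH]
    · intro z
      rw [hAapp, inner_sub_left, real_inner_smul_left, real_inner_self_eq_norm_sq]
      have h2 : ⟪H x z, z⟫ ≤ L * ‖z‖ ^ 2 := by
        calc ⟪H x z, z⟫ ≤ ‖H x z‖ * ‖z‖ := real_inner_le_norm _ _
          _ ≤ L * ‖z‖ * ‖z‖ := mul_le_mul_of_nonneg_right (hLH z) (norm_nonneg z)
          _ = L * ‖z‖ ^ 2 := by ring
      nlinarith [sq_nonneg ‖z‖]
    · exact hc0
    · intro z
      rw [hAapp, inner_sub_left, real_inner_smul_left, real_inner_self_eq_norm_sq]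
      have h2 := hμH z
      nlinarith [sq_nonneg ‖z‖]
  have hcontr : ∀ w ∈ O, ‖T w - T w₀‖ ≤ (1 - h * μ) * ‖w - w₀‖ := by
    intro w hw
    refine (convex_ball w₀ ε).norm_image_sub_le_of_norm_hasFDerivWithin_le
      (f := T) (f' := Afun) (fun x hx => ?_) (fun x hx => hAnorm x hx) hw₀O hw
    exact ((hasFDerivAt_id x).sub (((hKey x hx).1).const_smul h)).hasFDerivWithinAt
  have hUD : UniqueDiffOn ℝ B := by
    rw [hB]
    exact uniqueDiffOn_convex (convex_closedBall w₀ ε)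
      (by rw [interior_closedBall w₀ (ne_of_gt hε)]; exact ⟨w₀, hw₀O⟩)
  have hDcont : ContinuousOn (fderivWithin ℝ f B) B :=
    hC2.continuousOn_fderivWithin hUD (by norm_num)
  have hgc : ContinuousOn g B := by
    have h1 : ContinuousOn (fun y => J.symm (fderivWithin ℝ f B y)) B :=
      J.symm.continuous.comp_continuousOn hDcont
    refine h1.congr fun y hy => ?_
    have h2 : fderivWithin ℝ f B y = toDual ℝ _ (g y) :=
      ((hgrad y hy).hasFDerivAt.hasFDerivWithinAt).fderivWithin (hUD y hy)
    show g y = J.symm (fderivWithin ℝ f B y)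
    rw [h2, ← hJapp, ContinuousLinearEquiv.symm_apply_apply]
  have hTc : ContinuousOn T B := by
    exact continuousOn_id.sub (hgc.const_smul h)
  have hclos : w₀' ∈ closure O := by
    rw [hO, closure_ball w₀ (ne_of_gt hε)]
    exact hw₀'B
  have hnb : (𝓝[O] w₀').NeBot := mem_closure_iff_nhdsWithin_neBot.1 hclos
  have hcontr' : ‖T w₀' - T w₀‖ ≤ (1 - h * μ) * ‖w₀' - w₀‖ := by
    have htend : Tendsto (fun w => (1 - h * μ) * ‖w - w₀‖ - ‖T w - T w₀‖) (𝓝[O] w₀')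
        (𝓝 ((1 - h * μ) * ‖w₀' - w₀‖ - ‖T w₀' - T w₀‖)) := by
      apply ContinuousWithinAt.sub
      · exact (continuousWithinAt_const.mul
          (((continuous_id.sub continuous_const).norm).continuousWithinAt))
      · exact ((((hTc w₀' hw₀'B).mono hOB).sub continuousWithinAt_const).norm)
    have hev : ∀ᶠ w in 𝓝[O] w₀', 0 ≤ (1 - h * μ) * ‖w - w₀‖ - ‖T w - T w₀‖ := by
      filter_upwards [self_mem_nhdsWithin] with w hw
      linarith [hcontr w hw]
    have := ge_of_tendsto htend hev
    linarith
  have hfin : (w₀' - h • g' w₀') - (w₀ - h • g w₀)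
      = (T w₀' - T w₀) + h • (g w₀' - g' w₀') := by
    simp only [hT, smul_sub]
    abel
  rw [hfin]
  calc ‖(T w₀' - T w₀) + h • (g w₀' - g' w₀')‖
      ≤ ‖T w₀' - T w₀‖ + ‖h • (g w₀' - g' w₀')‖ := norm_add_le _ _
    _ ≤ (1 - h * μ) * ‖w₀' - w₀‖ + h * (μ * ε) := by
        refine add_le_add hcontr' ?_
        rw [norm_smul, Real.norm_eq_abs, abs_of_pos hh0]
        exact mul_le_mul_of_nonneg_left hgap hh0.le
    _ ≤ (1 - h * μ) * ε + h * (μ * ε) := by nlinarith [hd, hc0]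
    _ = ε := by ring
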